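/- For nonnegative integers n, m, r1, r2 with r1 ≤ r2: B_{n+m}(z; r1, r2) = Σ_{j=0}^{n} {n+r2 brace j+r2}_{r2} · z^j · B_m(z; r1, r2+j), as an identity of polynomials in z. -/

import Mathlib

open Finset
set_option linter.unusedSectionVars false

/-- `𝒜` is a set partition of `Fin N`: blocks are nonempty and every element
lies in exactly one block. -/
def IsSetPartition {N : ℕ} (𝒜 : Finset (Finset (Fin N))) : Prop :=
  (∀ t ∈ 𝒜, t.Nonempty) ∧ ∀ x : Fin N, ∃! t, t ∈ 𝒜 ∧ x ∈ t

/-- The elements of `S` lie in pairwise distinct blocks of `𝒜`. -/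
def DistinctBlocks {N : ℕ} (𝒜 : Finset (Finset (Fin N))) (S : Set (Fin N)) : Prop :=
  ∀ a ∈ S, ∀ b ∈ S, a ≠ b → ∀ t ∈ 𝒜, ¬(a ∈ t ∧ b ∈ t)

/-- The `r`-Stirling number of the second kind `{n+r brace k+r}_r`: the number of
partitions of `{1,…,n+r}` into `k+r` nonempty blocks with `1,…,r` in distinct blocks. -/
noncomputable def rStirling (r n k : ℕ) : ℕ :=
  Nat.card {𝒜 : Finset (Finset (Fin (n + r))) //
    IsSetPartition 𝒜 ∧ 𝒜.card = k + r ∧ DistinctBlocks 𝒜 {x | (x : ℕ) < r}}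

/-- The `(r₁,r₂)`-Stirling number of the second kind `{n+r₁+r₂ brace k+r₂}_{r₁,r₂}`. -/
noncomputable def rrStirling (r₁ r₂ n k : ℕ) : ℕ :=
  Nat.card {𝒜 : Finset (Finset (Fin (n + r₁ + r₂))) //
    IsSetPartition 𝒜 ∧ 𝒜.card = k + r₂ ∧
    DistinctBlocks 𝒜 {x | (x : ℕ) < r₁} ∧
    DistinctBlocks 𝒜 {x | r₁ ≤ (x : ℕ) ∧ (x : ℕ) < r₁ + r₂}}

/-- The `r`-Bell polynomial `B_n(z;r) = Σ_{k=0}^n {n+r brace k+r}_r z^k`. -/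
noncomputable def rBell (r n : ℕ) (z : ℝ) : ℝ :=
  ∑ k ∈ range (n + 1), (rStirling r n k : ℝ) * z ^ k

/-- The `(r₁,r₂)`-Bell polynomial `B_n(z;r₁,r₂) = Σ_{k=0}^{n+r₁} {n+r₁+r₂ brace k+r₂}_{r₁,r₂} z^k`. -/
noncomputable def rrBell (r₁ r₂ n : ℕ) (z : ℝ) : ℝ :=
  ∑ k ∈ range (n + r₁ + 1), (rrStirling r₁ r₂ n k : ℝ) * z ^ k


section Gen
variable {β : Type*} [DecidableEq β]

def GPart (𝒜 : Finset (Finset β)) : Prop :=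
  (∀ t ∈ 𝒜, t.Nonempty) ∧ ∀ x : β, ∃! t, t ∈ 𝒜 ∧ x ∈ t

def GDist (𝒜 : Finset (Finset β)) (S : Set β) : Prop :=
  ∀ a ∈ S, ∀ b ∈ S, a ≠ b → ∀ t ∈ 𝒜, ¬(a ∈ t ∧ b ∈ t)

noncomputable def GCount (c : ℕ) (S1 S2 : Set β) : ℕ :=
  Nat.card {𝒜 : Finset (Finset β) // GPart 𝒜 ∧ 𝒜.card = c ∧ GDist 𝒜 S1 ∧ GDist 𝒜 S2}

theorem GPart.block_eq {𝒜 : Finset (Finset β)} (h : GPart 𝒜) {t1 t2 : Finset β} {x : β}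
    (h1 : t1 ∈ 𝒜) (h2 : t2 ∈ 𝒜) (hx1 : x ∈ t1) (hx2 : x ∈ t2) : t1 = t2 :=
  ExistsUnique.unique (h.2 x) ⟨h1, hx1⟩ ⟨h2, hx2⟩

theorem GDist.mono {𝒜 : Finset (Finset β)} {S S' : Set β} (h : GDist 𝒜 S) (hs : S' ⊆ S) :
    GDist 𝒜 S' := fun a ha b hb hab => h a (hs ha) b (hs hb) hab

theorem GPart.empty_not_mem {𝒜 : Finset (Finset β)} (h : GPart 𝒜) : ∅ ∉ 𝒜 := fun hm =>
  by simpa using h.1 ∅ hm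

theorem GCount_key {γ : Type*} [DecidableEq γ] (e : β ≃ γ) (c : ℕ) (S1 S2 : Set β) :
     ∀ (𝒜 : Finset (Finset β)),
      (GPart 𝒜 ∧ 𝒜.card = c ∧ GDist 𝒜 S1 ∧ GDist 𝒜 S2) →
      (GPart (𝒜.image (fun t => t.map e.toEmbedding)) ∧
        (𝒜.image (fun t => t.map e.toEmbedding)).card = c ∧
        GDist (𝒜.image (fun t => t.map e.toEmbedding)) (e '' S1) ∧
        GDist (𝒜.image (fun t => t.map e.toEmbedding)) (e '' S2)) := by
  intro 𝒜 ⟨hp, hc, h1, h2⟩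
  have hinj : Function.Injective (fun t : Finset β => t.map e.toEmbedding) :=
    fun t1 t2 h12 => Finset.map_injective _ h12
  refine ⟨⟨?_, ?_⟩, ?_, ?_, ?_⟩
  · intro t ht
    simp only [Finset.mem_image] at ht
    obtain ⟨t', ht', rfl⟩ := ht
    exact (hp.1 t' ht').map
  · intro y
    obtain ⟨t, ⟨htm, hty⟩, huniq⟩ := hp.2 (e.symm y)
    refine ⟨t.map e.toEmbedding, ⟨Finset.mem_image_of_mem _ htm, by simp [Finset.mem_map_equiv, hty]⟩, ?_⟩
    rintro s ⟨hsm, hys⟩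
    simp only [Finset.mem_image] at hsm
    obtain ⟨t', ht', rfl⟩ := hsm
    rw [Finset.mem_map_equiv] at hys
    rw [huniq t' ⟨ht', hys⟩]
  · rw [Finset.card_image_of_injective _ hinj]; exact hc
  · rintro a ⟨a', ha', rfl⟩ b ⟨b', hb', rfl⟩ hab t htm ⟨hat, hbt⟩
    simp only [Finset.mem_image] at htm
    obtain ⟨t', ht', rfl⟩ := htm
    rw [Finset.mem_map_equiv] at hat hbt
    simp only [Equiv.symm_apply_apply] at hat hbt
    exact h1 a' ha' b' hb' (fun hh => hab (by rw [hh])) t' ht' ⟨hat, hbt⟩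
  · rintro a ⟨a', ha', rfl⟩ b ⟨b', hb', rfl⟩ hab t htm ⟨hat, hbt⟩
    simp only [Finset.mem_image] at htm
    obtain ⟨t', ht', rfl⟩ := htm
    rw [Finset.mem_map_equiv] at hat hbt
    simp only [Equiv.symm_apply_apply] at hat hbt
    exact h2 a' ha' b' hb' (fun hh => hab (by rw [hh])) t' ht' ⟨hat, hbt⟩
/-- transport of `GCount` along an equivalence of ground types -/
theorem GCount_congr {γ : Type*} [DecidableEq γ] (e : β ≃ γ) (c : ℕ) (S1 S2 : Set β) :
    GCount c S1 S2 = GCount c (e '' S1) (e '' S2) := by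
  apply Nat.card_congr
  refine ⟨fun ⟨𝒜, h⟩ => ⟨𝒜.image (fun t => t.map e.toEmbedding), GCount_key e c S1 S2 𝒜 h⟩,
    fun ⟨ℬ, h⟩ => ⟨ℬ.image (fun t => t.map e.symm.toEmbedding), ?_⟩, ?_, ?_⟩
  · have := GCount_key e.symm c (e '' S1) (e '' S2) ℬ h
    rwa [Equiv.symm_image_image, Equiv.symm_image_image] at this
  · rintro ⟨𝒜, h⟩
    apply Subtype.ext
    simp only
    rw [Finset.image_image]
    have : ∀ t : Finset β, ((t.map e.toEmbedding).map e.symm.toEmbedding) = t := by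
      intro t; ext x; simp [Finset.mem_map_equiv]
    calc 𝒜.image (fun t => (t.map e.toEmbedding).map e.symm.toEmbedding)
        = 𝒜.image id := Finset.image_congr (fun t _ => this t)
      _ = 𝒜 := Finset.image_id
  · rintro ⟨ℬ, h⟩
    apply Subtype.ext
    simp only
    rw [Finset.image_image]
    have : ∀ t : Finset γ, ((t.map e.symm.toEmbedding).map e.toEmbedding) = t := by
      intro t; ext x; simp [Finset.mem_map_equiv]
    calc ℬ.image (fun t => (t.map e.symm.toEmbedding).map e.toEmbedding)
        = ℬ.image id := Finset.image_congr (fun t _ => this t)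
      _ = ℬ := Finset.image_id
end Gen

section Core
variable {β : Type*} [DecidableEq β]

/-- preimage of a block under `some` -/
noncomputable def dn (t : Finset (Option β)) : Finset β :=
  t.preimage some (Option.some_injective β).injOn

def upb (t : Finset β) : Finset (Option β) := t.map Function.Embedding.some

@[simp] theorem mem_dn {t : Finset (Option β)} {b : β} : b ∈ dn t ↔ some b ∈ t :=
  Finset.mem_preimage

@[simp] theorem mem_upb {t : Finset β} {x : Option β} : x ∈ upb t ↔ ∃ b ∈ t, some b = x := by
  simp [upb, Function.Embedding.some]

theorem some_mem_upb {t : Finset β} {b : β} : some b ∈ upb t ↔ b ∈ t := by simp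

theorem none_not_mem_upb {t : Finset β} : none ∉ upb t := by simp

@[simp] theorem dn_upb (t : Finset β) : dn (upb t) = t := by ext b; simp

theorem upb_dn {t : Finset (Option β)} (h : none ∉ t) : upb (dn t) = t := by
  ext x
  cases x with
  | none => simp [h]
  | some b => simp

theorem upb_injective : Function.Injective (upb (β := β)) :=
  fun t1 t2 h => Finset.map_injective _ h

/-- restriction of a family of blocks of `Option β` to `β` -/
noncomputable def resP (𝒜 : Finset (Finset (Option β))) : Finset (Finset β) :=
  (𝒜.image dn).erase ∅

theorem mem_resP {𝒜 : Finset (Finset (Option β))} {s : Finset β} :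
    s ∈ resP 𝒜 ↔ s ≠ ∅ ∧ ∃ t ∈ 𝒜, dn t = s := by
  simp [resP, and_comm]

noncomputable def upP (𝒜 : Finset (Finset β)) : Finset (Finset (Option β)) := 𝒜.image upb

theorem mem_upP {𝒜 : Finset (Finset β)} {t : Finset (Option β)} :
    t ∈ upP 𝒜 ↔ ∃ s ∈ 𝒜, upb s = t := by simp [upP]

theorem card_upP (𝒜 : Finset (Finset β)) : (upP 𝒜).card = 𝒜.card :=
  Finset.card_image_of_injective _ upb_injective

/-- every block of a partition of `Option β` other than the block of `none`
contains a `some` element; if `{none} ∉ 𝒜` every block does -/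
theorem resP_part {𝒜 : Finset (Finset (Option β))} (hp : GPart 𝒜) : GPart (resP 𝒜) := by
  constructor
  · intro s hs
    rw [mem_resP] at hs
    exact Finset.nonempty_iff_ne_empty.2 hs.1
  · intro b
    obtain ⟨t, ⟨htm, htb⟩, _⟩ := hp.2 (some b)
    refine ⟨dn t, ⟨mem_resP.2 ⟨?_, t, htm, rfl⟩, mem_dn.2 htb⟩, ?_⟩
    · intro he
      have : b ∈ dn t := mem_dn.2 htb
      simp [he] at this
    · rintro s ⟨hsm, hbs⟩
      rw [mem_resP] at hsm
      obtain ⟨-, t', ht', rfl⟩ := hsm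
      rw [hp.block_eq ht' htm (mem_dn.1 hbs) htb]

theorem GDist_resP {𝒜 : Finset (Finset (Option β))} {S : Set β} :
    GDist (resP 𝒜) S ↔ GDist 𝒜 (some '' S) := by
  constructor
  · rintro h a ⟨a', ha', rfl⟩ b ⟨b', hb', rfl⟩ hab t htm ⟨hat, hbt⟩
    have hne : a' ≠ b' := fun hh => hab (by rw [hh])
    have hdn : dn t ∈ resP 𝒜 := by
      refine mem_resP.2 ⟨?_, t, htm, rfl⟩
      intro he
      have : a' ∈ dn t := mem_dn.2 hat
      simp [he] at this
    exact h a' ha' b' hb' hne (dn t) hdn ⟨mem_dn.2 hat, mem_dn.2 hbt⟩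
  · rintro h a ha b hb hab s hsm ⟨has, hbs⟩
    rw [mem_resP] at hsm
    obtain ⟨-, t, htm, rfl⟩ := hsm
    exact h (some a) ⟨a, ha, rfl⟩ (some b) ⟨b, hb, rfl⟩ (by simpa) t htm
      ⟨mem_dn.1 has, mem_dn.1 hbs⟩
end Core

section Core2
variable {β : Type*} [DecidableEq β]

@[simp] theorem dn_singleton_none : dn ({none} : Finset (Option β)) = ∅ := by ext b; simp

theorem dn_nonempty {t : Finset (Option β)} (hne : t.Nonempty) (h1 : t ≠ {none}) :
    (dn t).Nonempty := by
  by_contra hdn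
  rw [Finset.not_nonempty_iff_eq_empty] at hdn
  have hsub : t ⊆ {none} := by
    intro x hx
    cases x with
    | none => simp
    | some b => exact absurd (mem_dn.2 hx) (by simp [hdn])
  rcases Finset.subset_singleton_iff.1 hsub with h | h
  · exact absurd h (Finset.nonempty_iff_ne_empty.1 hne)
  · exact h1 h

theorem dn_inj_on {𝒜 : Finset (Finset (Option β))} (hp : GPart 𝒜) {t1 t2 : Finset (Option β)}
    (h1 : t1 ∈ 𝒜) (h2 : t2 ∈ 𝒜) (hn1 : t1 ≠ {none}) (heq : dn t1 = dn t2) : t1 = t2 := by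
  obtain ⟨b, hb⟩ := dn_nonempty (hp.1 t1 h1) hn1
  exact hp.block_eq h1 h2 (mem_dn.1 hb) (mem_dn.1 (heq ▸ hb))

theorem not_none_mem {𝒜 : Finset (Finset (Option β))} (hp : GPart 𝒜) (hnone : {none} ∈ 𝒜)
    {t : Finset (Option β)} (ht : t ∈ 𝒜) (hne : t ≠ {none}) : none ∉ t := fun hn =>
  hne (hp.block_eq ht hnone hn (by simp))

theorem resP_eq_of_singleton {𝒜 : Finset (Finset (Option β))} (hp : GPart 𝒜)
    (hnone : {none} ∈ 𝒜) : resP 𝒜 = (𝒜.erase {none}).image dn := by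
  ext s
  rw [mem_resP, Finset.mem_image]
  constructor
  · rintro ⟨hs, t, ht, rfl⟩
    refine ⟨t, Finset.mem_erase.2 ⟨?_, ht⟩, rfl⟩
    rintro rfl; simp at hs
  · rintro ⟨t, ht, rfl⟩
    rw [Finset.mem_erase] at ht
    exact ⟨Finset.nonempty_iff_ne_empty.1 (dn_nonempty (hp.1 t ht.2) ht.1), t, ht.2, rfl⟩

theorem resP_eq_of_not_singleton {𝒜 : Finset (Finset (Option β))} (hp : GPart 𝒜)
    (hnone : {none} ∉ 𝒜) : resP 𝒜 = 𝒜.image dn := by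
  ext s
  rw [mem_resP, Finset.mem_image]
  constructor
  · rintro ⟨hs, t, ht, rfl⟩; exact ⟨t, ht, rfl⟩
  · rintro ⟨t, ht, rfl⟩
    refine ⟨Finset.nonempty_iff_ne_empty.1 (dn_nonempty (hp.1 t ht) ?_), t, ht, rfl⟩
    rintro rfl; exact hnone ht

theorem card_resP_of_singleton {𝒜 : Finset (Finset (Option β))} (hp : GPart 𝒜)
    (hnone : {none} ∈ 𝒜) : (resP 𝒜).card = 𝒜.card - 1 := by
  rw [resP_eq_of_singleton hp hnone, Finset.card_image_of_injOn, Finset.card_erase_of_mem hnone]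
  intro t1 h1 t2 h2 heq
  rw [Finset.coe_erase, Set.mem_diff] at h1 h2
  exact dn_inj_on hp h1.1 h2.1 (by simpa using h1.2) heq

theorem card_resP_of_not_singleton {𝒜 : Finset (Finset (Option β))} (hp : GPart 𝒜)
    (hnone : {none} ∉ 𝒜) : (resP 𝒜).card = 𝒜.card := by
  rw [resP_eq_of_not_singleton hp hnone, Finset.card_image_of_injOn]
  intro t1 h1 t2 h2 heq
  exact dn_inj_on hp h1 h2 (fun hh => hnone (hh ▸ h1)) heq

theorem upb_ne_singleton_none (s : Finset β) : upb s ≠ ({none} : Finset (Option β)) := by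
  intro h
  have : (none : Option β) ∈ upb s := h ▸ Finset.mem_singleton_self _
  simp at this

/-- insert `{none}` case: the resulting object is a partition etc. -/
theorem insert_none_spec {𝒜' : Finset (Finset β)} (hp : GPart 𝒜') :
    GPart (insert ({none} : Finset (Option β)) (upP 𝒜')) ∧
    (insert ({none} : Finset (Option β)) (upP 𝒜')).card = 𝒜'.card + 1 := by
  have hni : ({none} : Finset (Option β)) ∉ upP 𝒜' := by
    rw [mem_upP]; rintro ⟨s, -, hs⟩; exact upb_ne_singleton_none s hs
  refine ⟨⟨?_, ?_⟩, ?_⟩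
  · intro t ht
    rcases Finset.mem_insert.1 ht with rfl | ht
    · simp
    · obtain ⟨s, hs, rfl⟩ := mem_upP.1 ht
      exact (hp.1 s hs).map
  · intro x
    cases x with
    | none =>
      refine ⟨{none}, ⟨Finset.mem_insert_self _ _, by simp⟩, ?_⟩
      rintro t ⟨htm, hnt⟩
      rcases Finset.mem_insert.1 htm with rfl | htm
      · rfl
      · obtain ⟨s, hs, rfl⟩ := mem_upP.1 htm
        exact absurd hnt none_not_mem_upb
    | some b =>
      obtain ⟨s, ⟨hsm, hbs⟩, huniq⟩ := hp.2 b
      refine ⟨upb s, ⟨Finset.mem_insert_of_mem (mem_upP.2 ⟨s, hsm, rfl⟩), some_mem_upb.2 hbs⟩, ?_⟩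
      rintro t ⟨htm, hbt⟩
      rcases Finset.mem_insert.1 htm with rfl | htm
      · simp at hbt
      · obtain ⟨s', hs', rfl⟩ := mem_upP.1 htm
        rw [huniq s' ⟨hs', some_mem_upb.1 hbt⟩]
  · rw [Finset.card_insert_of_notMem hni, card_upP]
end Core2

section Core3
variable {β : Type*} [DecidableEq β]

theorem GDist_insert_none_upP_S1 {𝒜' : Finset (Finset β)} {S : Set β} (h : GDist 𝒜' S) :
    GDist (insert ({none} : Finset (Option β)) (upP 𝒜')) (some '' S) := by
  rintro a ⟨a', ha', rfl⟩ b ⟨b', hb', rfl⟩ hab t htm ⟨hat, hbt⟩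
  rcases Finset.mem_insert.1 htm with rfl | htm
  · simp at hat
  · obtain ⟨s, hs, rfl⟩ := mem_upP.1 htm
    exact h a' ha' b' hb' (fun hh => hab (by rw [hh])) s hs
      ⟨some_mem_upb.1 hat, some_mem_upb.1 hbt⟩

theorem GDist_insert_none_upP_S2 {𝒜' : Finset (Finset β)} {S2 : Set β} {S2' : Set (Option β)}
    (hsup : S2' ⊆ some '' S2 ∪ {none}) (h : GDist 𝒜' S2) :
    GDist (insert ({none} : Finset (Option β)) (upP 𝒜')) S2' := by
  rintro a ha b hb hab t htm ⟨hat, hbt⟩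
  rcases Finset.mem_insert.1 htm with rfl | htm
  · rw [Finset.mem_singleton] at hat hbt
    exact hab (hat.trans hbt.symm)
  · obtain ⟨s, hs, rfl⟩ := mem_upP.1 htm
    obtain ⟨a', ha's, rfl⟩ := mem_upb.1 hat
    obtain ⟨b', hb's, rfl⟩ := mem_upb.1 hbt
    have ha2 : a' ∈ S2 := by
      rcases hsup ha with ⟨a'', ha'', he⟩ | hn
      · rwa [Option.some_inj.1 he] at ha''
      · simp at hn
    have hb2 : b' ∈ S2 := by
      rcases hsup hb with ⟨b'', hb'', he⟩ | hn
      · rwa [Option.some_inj.1 he] at hb''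
      · simp at hn
    exact h a' ha2 b' hb2 (fun hh => hab (by rw [hh])) s hs ⟨ha's, hb's⟩

/-- With `{none}` a block, distinctness w.r.t. `S2'` is equivalent to distinctness
of the restriction w.r.t. `S2`. -/
theorem GDist_singleton_down {𝒜 : Finset (Finset (Option β))} (hp : GPart 𝒜)
    {S2 : Set β} {S2' : Set (Option β)} (hsub : some '' S2 ⊆ S2')
    (h : GDist 𝒜 S2') : GDist (resP 𝒜) S2 :=
  GDist_resP.2 (h.mono hsub)

/-- The singleton-`{none}` case equivalence. -/
noncomputable def singletonEquiv (c : ℕ) (S1 S2 : Set β) (S2' : Set (Option β))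
    (hsub : some '' S2 ⊆ S2') (hsup : S2' ⊆ some '' S2 ∪ {none}) :
    {𝒜 : Finset (Finset (Option β)) // (GPart 𝒜 ∧ 𝒜.card = c + 1 ∧
        GDist 𝒜 (some '' S1) ∧ GDist 𝒜 S2') ∧ {none} ∈ 𝒜} ≃
    {𝒜' : Finset (Finset β) // GPart 𝒜' ∧ 𝒜'.card = c ∧ GDist 𝒜' S1 ∧ GDist 𝒜' S2} where
  toFun := fun ⟨𝒜, ⟨⟨hp, hc, h1, h2⟩, hnone⟩⟩ =>
    ⟨resP 𝒜, resP_part hp, by rw [card_resP_of_singleton hp hnone, hc]; rfl,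
      GDist_resP.2 h1, GDist_singleton_down hp hsub h2⟩
  invFun := fun ⟨𝒜', ⟨hp, hc, h1, h2⟩⟩ =>
    ⟨insert {none} (upP 𝒜'),
      ⟨(insert_none_spec hp).1, by rw [(insert_none_spec hp).2, hc],
        GDist_insert_none_upP_S1 h1, GDist_insert_none_upP_S2 hsup h2⟩,
      Finset.mem_insert_self _ _⟩
  left_inv := by
    rintro ⟨𝒜, ⟨⟨hp, hc, h1, h2⟩, hnone⟩⟩
    apply Subtype.ext
    simp only
    rw [resP_eq_of_singleton hp hnone]
    unfold upP
    rw [Finset.image_image]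
    have himg : (𝒜.erase {none}).image (upb ∘ dn) = 𝒜.erase {none} := by
      rw [show upb ∘ dn = fun t => upb (dn t) from rfl]
      have : ∀ t ∈ 𝒜.erase {none}, upb (dn t) = id t := by
        intro t ht
        rw [Finset.mem_erase] at ht
        exact upb_dn (not_none_mem hp hnone ht.2 ht.1)
      rw [Finset.image_congr fun t ht => this t ht, Finset.image_id]
    rw [himg, Finset.insert_erase hnone]
  right_inv := by
    rintro ⟨𝒜', ⟨hp, hc, h1, h2⟩⟩
    apply Subtype.ext
    simp only
    have hpins := (insert_none_spec (β := β) hp).1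
    rw [resP_eq_of_singleton hpins (Finset.mem_insert_self _ _),
      Finset.erase_insert, upP, Finset.image_image]
    · have : ∀ t ∈ 𝒜', (dn ∘ upb) t = id t := fun t _ => dn_upb t
      rw [Finset.image_congr fun t ht => this t ht, Finset.image_id]
    · rw [mem_upP]
      rintro ⟨s, -, hs⟩
      exact upb_ne_singleton_none s hs
end Core3

section Core4
variable {β : Type*} [DecidableEq β]

/-- the block of `none` -/
noncomputable def blk (𝒜 : Finset (Finset (Option β))) (hp : GPart 𝒜) : Finset (Option β) :=
  (hp.2 none).exists.choose

theorem blk_spec (𝒜 : Finset (Finset (Option β))) (hp : GPart 𝒜) :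
    blk 𝒜 hp ∈ 𝒜 ∧ none ∈ blk 𝒜 hp := (hp.2 none).exists.choose_spec

theorem blk_eq {𝒜 : Finset (Finset (Option β))} (hp : GPart 𝒜) {t : Finset (Option β)}
    (ht : t ∈ 𝒜) (hn : none ∈ t) : blk 𝒜 hp = t :=
  hp.block_eq (blk_spec 𝒜 hp).1 ht (blk_spec 𝒜 hp).2 hn

@[simp] theorem dn_insert_none (t : Finset (Option β)) : dn (insert none t) = dn t := by
  ext b; simp

theorem mem_insert_none_upb {B : Finset β} {b : β} :
    some b ∈ insert none (upb B) ↔ b ∈ B := by simp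

/-- the modified partition: `none` is inserted into the block `B` -/
noncomputable def joinP (𝒜' : Finset (Finset β)) (B : Finset β) : Finset (Finset (Option β)) :=
  insert (insert none (upb B)) (upP (𝒜'.erase B))

theorem joinP_spec {𝒜' : Finset (Finset β)} {B : Finset β} (hp : GPart 𝒜') (hB : B ∈ 𝒜') :
    GPart (joinP 𝒜' B) ∧ (joinP 𝒜' B).card = 𝒜'.card ∧ {none} ∉ joinP 𝒜' B := by
  have hTn : ({none} : Finset (Option β)) ≠ insert none (upb B) := by
    obtain ⟨b, hb⟩ := hp.1 B hB
    intro h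
    have : some b ∈ ({none} : Finset (Option β)) := h ▸ mem_insert_none_upb.2 hb
    simp at this
  have hTni : insert none (upb B) ∉ upP (𝒜'.erase B) := by
    rw [mem_upP]
    rintro ⟨s, -, hs⟩
    have : none ∈ upb s := hs ▸ Finset.mem_insert_self _ _
    simp at this
  refine ⟨⟨?_, ?_⟩, ?_, ?_⟩
  · intro t ht
    rcases Finset.mem_insert.1 ht with rfl | ht
    · exact ⟨none, Finset.mem_insert_self _ _⟩
    · obtain ⟨s, hs, rfl⟩ := mem_upP.1 ht
      exact (hp.1 s (Finset.mem_of_mem_erase hs)).map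
  · intro x
    cases x with
    | none =>
      refine ⟨insert none (upb B), ⟨Finset.mem_insert_self _ _, Finset.mem_insert_self _ _⟩, ?_⟩
      rintro t ⟨htm, hnt⟩
      rcases Finset.mem_insert.1 htm with rfl | htm
      · rfl
      · obtain ⟨s, hs, rfl⟩ := mem_upP.1 htm
        exact absurd hnt none_not_mem_upb
    | some b =>
      by_cases hbB : b ∈ B
      · refine ⟨insert none (upb B), ⟨Finset.mem_insert_self _ _, mem_insert_none_upb.2 hbB⟩, ?_⟩
        rintro t ⟨htm, hbt⟩
        rcases Finset.mem_insert.1 htm with rfl | htm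
        · rfl
        · obtain ⟨s, hs, rfl⟩ := mem_upP.1 htm
          rw [Finset.mem_erase] at hs
          exact absurd (hp.block_eq (Finset.mem_of_mem_erase (Finset.mem_erase.2 hs)) hB
            (some_mem_upb.1 hbt) hbB) hs.1
      · obtain ⟨s, ⟨hsm, hbs⟩, huniq⟩ := hp.2 b
        have hsB : s ≠ B := fun h => hbB (h ▸ hbs)
        refine ⟨upb s, ⟨Finset.mem_insert_of_mem (mem_upP.2 ⟨s, Finset.mem_erase.2 ⟨hsB, hsm⟩, rfl⟩),
          some_mem_upb.2 hbs⟩, ?_⟩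
        rintro t ⟨htm, hbt⟩
        rcases Finset.mem_insert.1 htm with rfl | htm
        · exact absurd (mem_insert_none_upb.1 hbt) hbB
        · obtain ⟨s', hs', rfl⟩ := mem_upP.1 htm
          rw [huniq s' ⟨Finset.mem_of_mem_erase hs', some_mem_upb.1 hbt⟩]
  · rw [joinP, Finset.card_insert_of_notMem hTni, card_upP,
      Finset.card_erase_of_mem hB, Nat.sub_add_cancel (Finset.card_pos.2 ⟨B, hB⟩)]
  · rw [joinP, Finset.mem_insert]
    rintro (h | h)
    · exact hTn h
    · obtain ⟨s, -, hs⟩ := mem_upP.1 h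
      exact upb_ne_singleton_none s hs

theorem joinP_GDist_S1 {𝒜' : Finset (Finset β)} {B : Finset β} (hB : B ∈ 𝒜')
    {S1 : Set β} (h1 : GDist 𝒜' S1) : GDist (joinP 𝒜' B) (some '' S1) := by
  rintro a ⟨a', ha', rfl⟩ b ⟨b', hb', rfl⟩ hab t htm ⟨hat, hbt⟩
  have hne : a' ≠ b' := fun hh => hab (by rw [hh])
  rcases Finset.mem_insert.1 htm with rfl | htm
  · exact h1 a' ha' b' hb' hne B hB ⟨mem_insert_none_upb.1 hat, mem_insert_none_upb.1 hbt⟩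
  · obtain ⟨s, hs, rfl⟩ := mem_upP.1 htm
    exact h1 a' ha' b' hb' hne s (Finset.mem_of_mem_erase hs)
      ⟨some_mem_upb.1 hat, some_mem_upb.1 hbt⟩

theorem joinP_GDist_S2 {𝒜' : Finset (Finset β)} {B : Finset β} (hB : B ∈ 𝒜')
    {S2 : Set β} {S2' : Set (Option β)} (hsup : S2' ⊆ some '' S2 ∪ {none})
    (h2 : GDist 𝒜' S2) (hOK : ∀ b ∈ B, ¬(none ∈ S2' ∧ some b ∈ S2')) :
    GDist (joinP 𝒜' B) S2' := by
  have hmem : ∀ a ∈ S2', a ≠ none → ∃ a' ∈ S2, some a' = a := by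
    intro a ha han
    rcases hsup ha with ⟨a', ha', he⟩ | hn
    · exact ⟨a', ha', he⟩
    · exact absurd hn han
  rintro a ha b hb hab t htm ⟨hat, hbt⟩
  rcases Finset.mem_insert.1 htm with rfl | htm
  · -- block `insert none (upb B)`
    by_cases han : a = none
    · subst han
      have hbn : b ≠ none := fun h => hab h.symm
      obtain ⟨b', hb', rfl⟩ := hmem b hb hbn
      exact hOK b' (mem_insert_none_upb.1 hbt) ⟨ha, hb⟩
    · by_cases hbn : b = none
      · subst hbn
        obtain ⟨a', ha', rfl⟩ := hmem a ha han
        exact hOK a' (mem_insert_none_upb.1 hat) ⟨hb, ha⟩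
      · obtain ⟨a', ha', rfl⟩ := hmem a ha han
        obtain ⟨b', hb', rfl⟩ := hmem b hb hbn
        exact h2 a' ha' b' hb' (fun hh => hab (by rw [hh])) B hB
          ⟨mem_insert_none_upb.1 hat, mem_insert_none_upb.1 hbt⟩
  · obtain ⟨s, hs, rfl⟩ := mem_upP.1 htm
    have han : a ≠ none := fun h => (h ▸ none_not_mem_upb) hat
    have hbn : b ≠ none := fun h => (h ▸ none_not_mem_upb) hbt
    obtain ⟨a', ha', rfl⟩ := hmem a ha han
    obtain ⟨b', hb', rfl⟩ := hmem b hb hbn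
    exact h2 a' ha' b' hb' (fun hh => hab (by rw [hh])) s (Finset.mem_of_mem_erase hs)
      ⟨some_mem_upb.1 hat, some_mem_upb.1 hbt⟩
end Core4

section Core5
variable {β : Type*} [DecidableEq β]

theorem erase_resP {𝒜 : Finset (Finset (Option β))} (hp : GPart 𝒜) (hnone : {none} ∉ 𝒜)
    {t0 : Finset (Option β)} (ht0 : t0 ∈ 𝒜) :
    (resP 𝒜).erase (dn t0) = (𝒜.erase t0).image dn := by
  rw [resP_eq_of_not_singleton hp hnone]
  ext s
  simp only [Finset.mem_erase, Finset.mem_image]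
  constructor
  · rintro ⟨hne, t, ht, rfl⟩
    exact ⟨t, ⟨fun h => hne (by rw [h]), ht⟩, rfl⟩
  · rintro ⟨t, ⟨htne, ht⟩, rfl⟩
    exact ⟨fun h => htne (dn_inj_on hp ht ht0 (fun hh => hnone (hh ▸ ht)) h), t, ht, rfl⟩

/-- The non-singleton case equivalence. -/
noncomputable def nonSingletonEquiv (c : ℕ) (S1 S2 : Set β) (S2' : Set (Option β))
    (hsub : some '' S2 ⊆ S2') (hsup : S2' ⊆ some '' S2 ∪ {none}) :
    {𝒜 : Finset (Finset (Option β)) // (GPart 𝒜 ∧ 𝒜.card = c + 1 ∧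
        GDist 𝒜 (some '' S1) ∧ GDist 𝒜 S2') ∧ ¬({none} ∈ 𝒜)} ≃
    {p : Finset (Finset β) × Finset β //
      (GPart p.1 ∧ p.1.card = c + 1 ∧ GDist p.1 S1 ∧ GDist p.1 S2) ∧
      p.2 ∈ p.1 ∧ ∀ b ∈ p.2, ¬(none ∈ S2' ∧ some b ∈ S2')} where
  toFun := fun ⟨𝒜, ⟨⟨hp, hc, h1, h2⟩, hnone⟩⟩ =>
    ⟨(resP 𝒜, dn (blk 𝒜 hp)),
      ⟨resP_part hp, by rw [card_resP_of_not_singleton hp hnone, hc],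
        GDist_resP.2 h1, GDist_resP.2 (h2.mono hsub)⟩,
      by
        refine mem_resP.2 ⟨?_, blk 𝒜 hp, (blk_spec 𝒜 hp).1, rfl⟩
        exact Finset.nonempty_iff_ne_empty.1 (dn_nonempty (hp.1 _ (blk_spec 𝒜 hp).1)
          (fun h => hnone (h ▸ (blk_spec 𝒜 hp).1))),
      by
        intro b hb ⟨hn2, hb2⟩
        exact h2 none hn2 (some b) hb2 (by simp) (blk 𝒜 hp) (blk_spec 𝒜 hp).1
          ⟨(blk_spec 𝒜 hp).2, mem_dn.1 hb⟩⟩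
  invFun := fun ⟨⟨𝒜', B⟩, ⟨⟨hp, hc, h1, h2⟩, hB, hOK⟩⟩ =>
    ⟨joinP 𝒜' B,
      ⟨(joinP_spec hp hB).1, by rw [(joinP_spec hp hB).2.1, hc],
        joinP_GDist_S1 hB h1, joinP_GDist_S2 hB hsup h2 hOK⟩,
      (joinP_spec hp hB).2.2⟩
  left_inv := by
    rintro ⟨𝒜, ⟨⟨hp, hc, h1, h2⟩, hnone⟩⟩
    apply Subtype.ext
    simp only [joinP]
    have hblk := blk_spec 𝒜 hp
    have hup : insert none (upb (dn (blk 𝒜 hp))) = blk 𝒜 hp := by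
      ext x
      cases x with
      | none => simp [hblk.2]
      | some b => simp [mem_insert_none_upb]
    rw [hup, erase_resP hp hnone hblk.1, upP, Finset.image_image]
    have : ∀ t ∈ 𝒜.erase (blk 𝒜 hp), (upb ∘ dn) t = id t := by
      intro t ht
      rw [Finset.mem_erase] at ht
      refine upb_dn (fun hn => ht.1 (blk_eq hp ht.2 hn).symm)
    rw [Finset.image_congr fun t ht => this t ht, Finset.image_id, Finset.insert_erase hblk.1]
  right_inv := by
    rintro ⟨⟨𝒜', B⟩, ⟨⟨hp, hc, h1, h2⟩, hB, hOK⟩⟩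
    apply Subtype.ext
    have hj := joinP_spec hp hB
    have hpj := hj.1
    have hTm : insert none (upb B) ∈ joinP 𝒜' B := Finset.mem_insert_self _ _
    have hblk : blk (joinP 𝒜' B) hpj = insert none (upb B) :=
      blk_eq hpj hTm (Finset.mem_insert_self _ _)
    have hdnT : dn (blk (joinP 𝒜' B) hpj) = B := by
      rw [hblk, dn_insert_none, dn_upb]
    have hres : resP (joinP 𝒜' B) = 𝒜' := by
      rw [resP_eq_of_not_singleton hpj hj.2.2, joinP, Finset.image_insert, dn_insert_none,
        dn_upb, upP, Finset.image_image]
      have : ∀ t ∈ 𝒜'.erase B, (dn ∘ upb) t = id t := fun t _ => dn_upb t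
      rw [Finset.image_congr fun t ht => this t ht, Finset.image_id, Finset.insert_erase hB]
    simp only
    exact Prod.ext hres hdnT
end Core5

section Count
variable {β : Type*} [DecidableEq β] [Fintype β]

theorem nat_card_split {α : Type*} [Fintype α] (P Q : α → Prop) :
    Nat.card {x // P x} = Nat.card {x // P x ∧ Q x} + Nat.card {x // P x ∧ ¬ Q x} := by
  classical
  rw [← Nat.card_sum]
  apply Nat.card_congr
  refine ⟨fun x => if h : Q x.1 then Sum.inl ⟨x.1, x.2, h⟩ else Sum.inr ⟨x.1, x.2, h⟩,
    fun s => Sum.elim (fun x => ⟨x.1, x.2.1⟩) (fun x => ⟨x.1, x.2.1⟩) s, ?_, ?_⟩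
  · rintro ⟨x, hx⟩
    by_cases h : Q x <;> simp [h]
  · rintro (⟨x, hx⟩ | ⟨x, hx⟩)
    · simp [hx.2]
    · simp [hx.2]

theorem card_subtype_prod {α γ : Type*} [Fintype α] [Fintype γ]
    (P : α → Prop) (R : α → γ → Prop) (d : ℕ) (hd : ∀ a, P a → Nat.card {y // R a y} = d) :
    Nat.card {p : α × γ // P p.1 ∧ R p.1 p.2} = d * Nat.card {a // P a} := by
  classical
  rw [Nat.card_congr (Equiv.subtypeProdEquivSigmaSubtype (fun a y => P a ∧ R a y)),
    Nat.card_eq_fintype_card, Fintype.card_sigma]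
  have h1 : ∀ a : α, Fintype.card {y // P a ∧ R a y} = if P a then d else 0 := by
    intro a
    by_cases h : P a
    · rw [if_pos h, ← Nat.card_eq_fintype_card, ← hd a h]
      exact Nat.card_congr (Equiv.subtypeEquivRight (fun y => by simp [h]))
    · rw [if_neg h, Fintype.card_eq_zero_iff]
      exact ⟨fun y => h y.2.1⟩
  rw [Finset.sum_congr rfl (fun a _ => h1 a), ← Finset.sum_filter, Finset.sum_const,
    smul_eq_mul, Nat.card_eq_fintype_card, Fintype.card_subtype, Nat.mul_comm]

/-- choice of the block of an element -/
noncomputable def gblk (𝒜 : Finset (Finset β)) (hp : GPart 𝒜) (b : β) : Finset β :=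
  (hp.2 b).exists.choose

theorem gblk_spec (𝒜 : Finset (Finset β)) (hp : GPart 𝒜) (b : β) :
    gblk 𝒜 hp b ∈ 𝒜 ∧ b ∈ gblk 𝒜 hp b := (hp.2 b).exists.choose_spec

theorem fiber_card (𝒜 : Finset (Finset β)) (hp : GPart 𝒜) (F : Finset β)
    (hD : GDist 𝒜 ↑F) :
    Nat.card {B : Finset β // B ∈ 𝒜 ∧ ∀ b ∈ B, b ∉ F} = 𝒜.card - F.card := by
  classical
  have hcongr : Nat.card {B : Finset β // B ∈ 𝒜 ∧ ∀ b ∈ B, b ∉ F} =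
      (𝒜.filter (fun B => ∀ b ∈ B, b ∉ F)).card := by
    rw [← Nat.card_eq_finsetCard]
    exact Nat.card_congr (Equiv.subtypeEquivRight (fun B => by simp [Finset.mem_filter]))
  rw [hcongr]
  have himg : 𝒜.filter (fun B => ¬ ∀ b ∈ B, b ∉ F) = F.image (gblk 𝒜 hp) := by
    ext B
    rw [Finset.mem_filter, Finset.mem_image]
    push_neg
    constructor
    · rintro ⟨hB, b, hbB, hbF⟩
      exact ⟨b, hbF, (hp.block_eq (gblk_spec 𝒜 hp b).1 hB (gblk_spec 𝒜 hp b).2 hbB)⟩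
    · rintro ⟨b, hbF, rfl⟩
      exact ⟨(gblk_spec 𝒜 hp b).1, b, (gblk_spec 𝒜 hp b).2, hbF⟩
  have hinj : Set.InjOn (gblk 𝒜 hp) ↑F := by
    intro b1 h1 b2 h2 heq
    by_contra hne
    exact hD b1 h1 b2 h2 hne (gblk 𝒜 hp b1) (gblk_spec 𝒜 hp b1).1
      ⟨(gblk_spec 𝒜 hp b1).2, heq ▸ (gblk_spec 𝒜 hp b2).2⟩
  have hcF : (𝒜.filter (fun B => ¬ ∀ b ∈ B, b ∉ F)).card = F.card := by
    rw [himg, Finset.card_image_of_injOn hinj]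
  have := Finset.card_filter_add_card_filter_not
    (s := 𝒜) (p := fun B => ∀ b ∈ B, b ∉ F)
  omega

theorem GCount_succ_free (c : ℕ) (S1 S2 : Set β) :
    GCount (c + 1) (some '' S1 : Set (Option β)) (some '' S2) =
      GCount c S1 S2 + (c + 1) * GCount (c + 1) S1 S2 := by
  classical
  have hsub : some '' S2 ⊆ (some '' S2 : Set (Option β)) := subset_rfl
  have hsup : (some '' S2 : Set (Option β)) ⊆ some '' S2 ∪ {none} := Set.subset_union_left
  rw [GCount, nat_card_split _ (fun 𝒜 => {none} ∈ 𝒜),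
    Nat.card_congr (singletonEquiv c S1 S2 _ hsub hsup),
    Nat.card_congr (nonSingletonEquiv c S1 S2 _ hsub hsup)]
  congr 1
  rw [card_subtype_prod (γ := Finset β)
    (P := fun 𝒜' => GPart 𝒜' ∧ 𝒜'.card = c + 1 ∧ GDist 𝒜' S1 ∧ GDist 𝒜' S2)
    (R := fun 𝒜' B => B ∈ 𝒜' ∧ ∀ b ∈ B, ¬((none : Option β) ∈ some '' S2 ∧ some b ∈ some '' S2))
    (d := c + 1) ?_]
  · rfl
  · rintro 𝒜' ⟨hp, hc, h1, h2⟩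
    have : ∀ B : Finset β, (B ∈ 𝒜' ∧ ∀ b ∈ B, ¬((none : Option β) ∈ some '' S2 ∧ some b ∈ some '' S2)) ↔ B ∈ 𝒜' := by
      intro B
      simp only [and_iff_left_iff_imp]
      intro _ b _ ⟨hn, _⟩
      obtain ⟨x, -, hx⟩ := hn
      exact nomatch hx
    rw [Nat.card_congr (Equiv.subtypeEquivRight this), Nat.card_eq_finsetCard, hc]

theorem GCount_succ_special (c : ℕ) (S1 : Set β) (F : Finset β) :
    GCount (c + 1) (some '' S1 : Set (Option β)) (some '' ↑F ∪ {none}) =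
      GCount c S1 ↑F + (c + 1 - F.card) * GCount (c + 1) S1 ↑F := by
  classical
  have hsub : some '' (↑F : Set β) ⊆ some '' ↑F ∪ {none} := Set.subset_union_left
  have hsup : (some '' ↑F ∪ {none} : Set (Option β)) ⊆ some '' ↑F ∪ {none} := subset_rfl
  rw [GCount, nat_card_split _ (fun 𝒜 => {none} ∈ 𝒜),
    Nat.card_congr (singletonEquiv c S1 ↑F _ hsub hsup),
    Nat.card_congr (nonSingletonEquiv c S1 ↑F _ hsub hsup)]
  congr 1
  rw [card_subtype_prod (γ := Finset β)
    (P := fun 𝒜' => GPart 𝒜' ∧ 𝒜'.card = c + 1 ∧ GDist 𝒜' S1 ∧ GDist 𝒜' ↑F)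
    (R := fun 𝒜' B => B ∈ 𝒜' ∧ ∀ b ∈ B,
      ¬((none : Option β) ∈ some '' ↑F ∪ {none} ∧ some b ∈ some '' ↑F ∪ {none}))
    (d := c + 1 - F.card) ?_]
  · rfl
  · rintro 𝒜' ⟨hp, hc, h1, h2⟩
    have hiff : ∀ B : Finset β, (B ∈ 𝒜' ∧ ∀ b ∈ B,
        ¬((none : Option β) ∈ some '' ↑F ∪ {none} ∧ some b ∈ some '' ↑F ∪ {none})) ↔
        (B ∈ 𝒜' ∧ ∀ b ∈ B, b ∉ F) := by
      intro B
      apply and_congr_right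
      intro _
      apply forall_congr'
      intro b
      constructor
      · intro hb hbB hbF
        exact hb hbB ⟨Set.mem_union_right _ rfl, Set.mem_union_left _ ⟨b, hbF, rfl⟩⟩
      · rintro hb hbB ⟨-, hsb⟩
        rcases hsb with ⟨x, hx, hxe⟩ | hn
        · exact hb hbB (Option.some_inj.1 hxe ▸ hx)
        · exact absurd hn (by simp)
    rw [Nat.card_congr (Equiv.subtypeEquivRight hiff), fiber_card 𝒜' hp F h2, hc]
end Count

section Degenerate
variable {β : Type*} [DecidableEq β] [Fintype β]

theorem GCount_eq_zero (c : ℕ) (S1 S2 : Set β)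
    (h : ∀ 𝒜 : Finset (Finset β), GPart 𝒜 → 𝒜.card = c → GDist 𝒜 S1 → GDist 𝒜 S2 → False) :
    GCount c S1 S2 = 0 := by
  have : IsEmpty {𝒜 : Finset (Finset β) // GPart 𝒜 ∧ 𝒜.card = c ∧ GDist 𝒜 S1 ∧ GDist 𝒜 S2} :=
    ⟨fun ⟨𝒜, hp, hc, h1, h2⟩ => h 𝒜 hp hc h1 h2⟩
  exact Nat.card_of_isEmpty

theorem GPart_sum_card {𝒜 : Finset (Finset β)} (hp : GPart 𝒜) :
    ∑ t ∈ 𝒜, t.card = Fintype.card β := by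
  classical
  have hdisj : ∀ t1 ∈ 𝒜, ∀ t2 ∈ 𝒜, t1 ≠ t2 → Disjoint t1 t2 := by
    intro t1 h1 t2 h2 hne
    rw [Finset.disjoint_left]
    intro x hx1 hx2
    exact hne (hp.block_eq h1 h2 hx1 hx2)
  have huniv : 𝒜.biUnion id = Finset.univ := by
    ext x
    simp only [Finset.mem_biUnion, id, Finset.mem_univ, iff_true]
    obtain ⟨t, ⟨ht, hx⟩, -⟩ := hp.2 x
    exact ⟨t, ht, hx⟩
  calc ∑ t ∈ 𝒜, t.card = (𝒜.biUnion id).card := (Finset.card_biUnion hdisj).symm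
    _ = Fintype.card β := by rw [huniv, Finset.card_univ]

theorem GPart_card_le {𝒜 : Finset (Finset β)} (hp : GPart 𝒜) : 𝒜.card ≤ Fintype.card β := by
  calc 𝒜.card = ∑ _t ∈ 𝒜, 1 := by simp
    _ ≤ ∑ t ∈ 𝒜, t.card := Finset.sum_le_sum (fun t ht => Finset.card_pos.2 (hp.1 t ht))
    _ = Fintype.card β := GPart_sum_card hp

theorem GCount_zero_of_big (c : ℕ) (S1 S2 : Set β) (h : Fintype.card β < c) :
    GCount c S1 S2 = 0 :=
  GCount_eq_zero c S1 S2 (fun 𝒜 hp hc _ _ => absurd (hc ▸ GPart_card_le hp) (by omega))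

theorem GCount_zero_of_zero [Nonempty β] (S1 S2 : Set β) : GCount 0 S1 S2 = 0 := by
  apply GCount_eq_zero 0 S1 S2
  intro 𝒜 hp hc _ _
  obtain ⟨t, ⟨ht, -⟩, -⟩ := hp.2 (Classical.arbitrary β)
  rw [Finset.card_eq_zero] at hc
  subst hc
  simp at ht

theorem GCount_zero_of_finset (c : ℕ) (S1 : Set β) (F : Finset β) (h : c < F.card) :
    GCount c S1 ↑F = 0 := by
  apply GCount_eq_zero
  intro 𝒜 hp hc _ h2
  have hle : F.card ≤ 𝒜.card := by
    apply Finset.card_le_card_of_injOn (gblk 𝒜 hp)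
    · intro b _; exact (gblk_spec 𝒜 hp b).1
    · intro b1 h1 b2 h2' heq
      by_contra hne
      exact h2 b1 h1 b2 h2' hne (gblk 𝒜 hp b1) (gblk_spec 𝒜 hp b1).1
        ⟨(gblk_spec 𝒜 hp b1).2, heq ▸ (gblk_spec 𝒜 hp b2).2⟩
  omega

/-- the singleton partition -/
theorem GCount_card (S1 S2 : Set β) : GCount (Fintype.card β) S1 S2 = 1 := by
  classical
  have hsingle : ∀ 𝒜 : Finset (Finset β), GPart 𝒜 → 𝒜.card = Fintype.card β →
      ∀ t ∈ 𝒜, t.card = 1 := by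
    intro 𝒜 hp hc
    by_contra hbad
    push_neg at hbad
    obtain ⟨t0, ht0, hct0⟩ := hbad
    have h2 : 2 ≤ t0.card := by
      have := Finset.card_pos.2 (hp.1 t0 ht0)
      omega
    have hsum : ∑ t ∈ 𝒜, t.card = (∑ t ∈ 𝒜.erase t0, t.card) + t0.card :=
      (Finset.sum_erase_add _ _ ht0).symm
    have hcard : 𝒜.card = (𝒜.erase t0).card + 1 := by
      rw [Finset.card_erase_of_mem ht0]
      have := Finset.card_pos.2 ⟨t0, ht0⟩
      omega
    have hle : (𝒜.erase t0).card ≤ ∑ t ∈ 𝒜.erase t0, t.card := by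
      rw [Finset.card_eq_sum_ones]
      exact Finset.sum_le_sum (fun t ht => Finset.card_pos.2 (hp.1 t (Finset.mem_of_mem_erase ht)))
    have htot := GPart_sum_card hp
    omega
  have hform : ∀ 𝒜 : Finset (Finset β), GPart 𝒜 → 𝒜.card = Fintype.card β →
      𝒜 = Finset.univ.image (fun x => ({x} : Finset β)) := by
    intro 𝒜 hp hc
    ext t
    simp only [Finset.mem_image, Finset.mem_univ, true_and]
    constructor
    · intro ht
      obtain ⟨x, hx⟩ := Finset.card_eq_one.1 (hsingle 𝒜 hp hc t ht)
      exact ⟨x, hx.symm⟩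
    · rintro ⟨x, rfl⟩
      obtain ⟨t', ⟨ht', hxt'⟩, -⟩ := hp.2 x
      obtain ⟨y, hy⟩ := Finset.card_eq_one.1 (hsingle 𝒜 hp hc t' ht')
      have hxy : x = y := by rw [hy] at hxt'; simpa using hxt'
      rw [hxy, ← hy]
      exact ht'
  have hmem : GPart (Finset.univ.image (fun x => ({x} : Finset β))) ∧
      (Finset.univ.image (fun x => ({x} : Finset β))).card = Fintype.card β ∧
      GDist (Finset.univ.image (fun x => ({x} : Finset β))) S1 ∧
      GDist (Finset.univ.image (fun x => ({x} : Finset β))) S2 := by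
    refine ⟨⟨?_, ?_⟩, ?_, ?_, ?_⟩
    · rintro t ht
      obtain ⟨x, -, rfl⟩ := Finset.mem_image.1 ht
      exact ⟨x, Finset.mem_singleton_self x⟩
    · intro x
      refine ⟨{x}, ⟨Finset.mem_image.2 ⟨x, Finset.mem_univ x, rfl⟩, Finset.mem_singleton_self x⟩, ?_⟩
      rintro t ⟨htm, hxt⟩
      obtain ⟨y, -, rfl⟩ := Finset.mem_image.1 htm
      rw [Finset.mem_singleton] at hxt
      rw [hxt]
    · rw [Finset.card_image_of_injective _ (fun a b h => by simpa using h), Finset.card_univ]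
    · rintro a _ b _ hab t htm ⟨hat, hbt⟩
      obtain ⟨y, -, rfl⟩ := Finset.mem_image.1 htm
      rw [Finset.mem_singleton] at hat hbt
      exact hab (hat.trans hbt.symm)
    · rintro a _ b _ hab t htm ⟨hat, hbt⟩
      obtain ⟨y, -, rfl⟩ := Finset.mem_image.1 htm
      rw [Finset.mem_singleton] at hat hbt
      exact hab (hat.trans hbt.symm)
  rw [GCount]
  have : Nonempty {𝒜 : Finset (Finset β) // GPart 𝒜 ∧ 𝒜.card = Fintype.card β ∧
      GDist 𝒜 S1 ∧ GDist 𝒜 S2} := ⟨⟨_, hmem.1, hmem.2.1, hmem.2.2⟩⟩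
  have hsub : Subsingleton {𝒜 : Finset (Finset β) // GPart 𝒜 ∧ 𝒜.card = Fintype.card β ∧
      GDist 𝒜 S1 ∧ GDist 𝒜 S2} := by
    constructor
    rintro ⟨𝒜1, hp1, hc1, -⟩ ⟨𝒜2, hp2, hc2, -⟩
    exact Subtype.ext ((hform 𝒜1 hp1 hc1).trans (hform 𝒜2 hp2 hc2).symm)
  exact Nat.card_unique
end Degenerate

section FinBridge

/-- value of the inverse of the removal equivalence -/
theorem symm_val {M N : ℕ} (h : M = N + 1) (i : Fin (N + 1)) (a : Option (Fin N)) :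
    ((((finCongr h).trans (finSuccEquiv' i)).symm a) : Fin M).val =
      Option.elim a i.val (fun y => if y.val < i.val then y.val else y.val + 1) := by
  rw [Equiv.symm_trans_apply]
  cases a with
  | none =>
    rw [finSuccEquiv'_symm_none]
    simp
  | some y =>
    rw [finSuccEquiv'_symm_some]
    simp only [Option.elim]
    rcases lt_or_ge (y.val) (i.val) with hlt | hle
    · rw [Fin.succAbove_of_castSucc_lt i y (by simpa [Fin.lt_def] using hlt)]
      simp [if_pos hlt]
    · rw [Fin.succAbove_of_le_castSucc i y (by simpa [Fin.le_def] using hle)]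
      simp [if_neg (Nat.not_lt.2 hle)]

theorem mem_image_equiv' {α γ : Type*} (e : α ≃ γ) (S : Set α) (a : γ) :
    a ∈ e '' S ↔ e.symm a ∈ S := by
  rw [Equiv.image_eq_preimage_symm]; rfl

/-- the interval finset in `Fin M` -/
def intervalF (M r1 r2 : ℕ) : Finset (Fin M) :=
  Finset.univ.filter (fun x => r1 ≤ x.val ∧ x.val < r1 + r2)

theorem coe_intervalF (M r1 r2 : ℕ) :
    (↑(intervalF M r1 r2) : Set (Fin M)) = {x : Fin M | r1 ≤ x.val ∧ x.val < r1 + r2} := by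
  ext x; simp [intervalF]

theorem card_intervalF (M r1 r2 : ℕ) (h : r1 + r2 ≤ M) : (intervalF M r1 r2).card = r2 := by
  have hmem : ∀ x : Fin M, x ∈ intervalF M r1 r2 ↔ r1 ≤ x.val ∧ x.val < r1 + r2 := by
    intro x; simp [intervalF]
  have key : (intervalF M r1 r2).card = (Finset.range r2).card := by
    apply Finset.card_bij' (i := fun x _ => x.val - r1)
      (j := fun v hv => (⟨r1 + v, by rw [Finset.mem_range] at hv; omega⟩ : Fin M))
    all_goals intro x hx
    all_goals simp only [hmem, Finset.mem_range] at hx ⊢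
    all_goals first
      | omega
      | (apply Fin.ext; simp; omega)
      | (refine ⟨?_, ?_⟩ <;> simp <;> omega)
      | (simp; omega)
  rw [key, Finset.card_range]
end FinBridge

section Images

theorem img_lower {M N : ℕ} (hM : M = N + 1) (i : Fin (N + 1)) (r : ℕ) (hr : r ≤ i.val) :
    ((finCongr hM).trans (finSuccEquiv' i)) '' {x : Fin M | x.val < r} =
      some '' {x : Fin N | x.val < r} := by
  ext a
  rw [mem_image_equiv']
  simp only [Set.mem_setOf_eq]
  rw [show ((((finCongr hM).trans (finSuccEquiv' i)).symm a) : Fin M).val =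
    Option.elim a i.val (fun y => if y.val < i.val then y.val else y.val + 1) from symm_val hM i a]
  cases a with
  | none => simp; omega
  | some y =>
    simp only [Option.elim]
    constructor
    · intro hy
      refine ⟨y, ?_, rfl⟩
      simp only [Set.mem_setOf_eq]
      by_cases hc : (y.val < i.val) <;> simp [hc] at hy <;> omega
    · rintro ⟨x, hx, hxe⟩
      obtain rfl : x = y := Option.some_inj.1 hxe
      simp only [Set.mem_setOf_eq] at hx
      by_cases hc : (x.val < i.val) <;> simp [hc] <;> omega

theorem img_mid_free {M N : ℕ} (hM : M = N + 1) (r1 r2 : ℕ) (hr : r1 + r2 ≤ N) :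
    ((finCongr hM).trans (finSuccEquiv' (Fin.last N))) ''
        {x : Fin M | r1 ≤ x.val ∧ x.val < r1 + r2} =
      some '' {x : Fin N | r1 ≤ x.val ∧ x.val < r1 + r2} := by
  ext a
  rw [mem_image_equiv']
  simp only [Set.mem_setOf_eq]
  rw [show ((((finCongr hM).trans (finSuccEquiv' (Fin.last N))).symm a) : Fin M).val =
    Option.elim a (Fin.last N).val
      (fun y => if y.val < (Fin.last N).val then y.val else y.val + 1) from symm_val hM _ a]
  cases a with
  | none => simp [Fin.val_last]; omega
  | some y =>
    have hy := y.isLt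
    simp only [Option.elim, Fin.val_last, if_pos hy]
    constructor
    · intro h
      exact ⟨y, h, rfl⟩
    · rintro ⟨x, hx, hxe⟩
      obtain rfl : x = y := Option.some_inj.1 hxe
      exact hx

theorem img_mid_special {M N r1 r2 : ℕ} (hM : M = N + 1) (hN : r1 + r2 ≤ N)
    (i : Fin (N + 1)) (hi : i.val = r1 + r2) :
    ((finCongr hM).trans (finSuccEquiv' i)) ''
        {x : Fin M | r1 ≤ x.val ∧ x.val < r1 + (r2 + 1)} =
      some '' {x : Fin N | r1 ≤ x.val ∧ x.val < r1 + r2} ∪ {none} := by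
  ext a
  rw [mem_image_equiv']
  simp only [Set.mem_setOf_eq]
  rw [show ((((finCongr hM).trans (finSuccEquiv' i)).symm a) : Fin M).val =
    Option.elim a i.val (fun y => if y.val < i.val then y.val else y.val + 1) from symm_val hM i a]
  cases a with
  | none => simp [hi]
  | some y =>
    simp only [Option.elim, Set.mem_union, Set.mem_image, Set.mem_setOf_eq]
    constructor
    · intro h
      left
      refine ⟨y, ?_, rfl⟩
      by_cases hc : (y.val < i.val) <;> simp [hc] at h <;> omega
    · rintro (⟨x, hx, hxe⟩ | hn)
      · obtain rfl : x = y := Option.some_inj.1 hxe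
        by_cases hc : (x.val < i.val) <;> simp [hc] <;> omega
      · exact absurd hn (by simp)
end Images

section StirlingRec

theorem rrStirling_def' (r1 r2 n k : ℕ) :
    rrStirling r1 r2 n k = GCount (k + r2) ({x | (x : ℕ) < r1} : Set (Fin (n + r1 + r2)))
      {x | r1 ≤ (x : ℕ) ∧ (x : ℕ) < r1 + r2} := rfl

theorem rStirling_def' (r n k : ℕ) :
    rStirling r n k = GCount (k + r) (∅ : Set (Fin (n + r))) {x | (x : ℕ) < r} := by
  apply Nat.card_congr
  apply Equiv.subtypeEquivRight
  intro 𝒜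
  constructor
  · rintro ⟨a, b, c⟩
    exact ⟨a, b, fun x hx => absurd hx (Set.notMem_empty x), c⟩
  · rintro ⟨a, b, -, c⟩
    exact ⟨a, b, c⟩

theorem rrStirling_rec (r1 r2 n k : ℕ) :
    rrStirling r1 r2 (n + 1) (k + 1) =
      rrStirling r1 r2 n k + (k + 1 + r2) * rrStirling r1 r2 n (k + 1) := by
  have hM : (n + 1) + r1 + r2 = (n + r1 + r2) + 1 := by omega
  rw [rrStirling_def',
    GCount_congr ((finCongr hM).trans (finSuccEquiv' (Fin.last (n + r1 + r2)))),
    img_lower hM (Fin.last (n + r1 + r2)) r1 (by rw [Fin.val_last]; omega),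
    img_mid_free hM r1 r2 (by omega),
    show (k + 1) + r2 = (k + r2) + 1 from by omega,
    GCount_succ_free (k + r2) _ _,
    rrStirling_def' r1 r2 n k, rrStirling_def' r1 r2 n (k + 1),
    show (k + 1) + r2 = (k + r2) + 1 from by omega]

theorem rrStirling_rec_zero (r1 r2 n : ℕ) :
    rrStirling r1 r2 (n + 1) 0 = r2 * rrStirling r1 r2 n 0 := by
  rcases r2 with _ | c
  · have h1 : Nonempty (Fin ((n + 1) + r1 + 0)) := ⟨⟨0, by omega⟩⟩
    rw [rrStirling_def', show (0 : ℕ) + 0 = 0 from rfl, GCount_zero_of_zero]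
    ring
  · have hM : (n + 1) + r1 + (c + 1) = (n + r1 + (c + 1)) + 1 := by omega
    rw [rrStirling_def',
      GCount_congr ((finCongr hM).trans (finSuccEquiv' (Fin.last (n + r1 + (c + 1))))),
      img_lower hM (Fin.last (n + r1 + (c + 1))) r1 (by rw [Fin.val_last]; omega),
      img_mid_free hM r1 (c + 1) (by omega),
      show (0 : ℕ) + (c + 1) = c + 1 from by omega,
      GCount_succ_free c _ _]
    have hz : GCount c ({x | (x : ℕ) < r1} : Set (Fin (n + r1 + (c + 1))))
        {x | r1 ≤ (x : ℕ) ∧ (x : ℕ) < r1 + (c + 1)} = 0 := by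
      rw [← coe_intervalF]
      exact GCount_zero_of_finset c _ _ (by rw [card_intervalF _ _ _ (by omega)]; omega)
    rw [hz, rrStirling_def' r1 (c + 1) n 0, show (0 : ℕ) + (c + 1) = c + 1 from by omega]
    ring

theorem rStirling_rec (r n k : ℕ) :
    rStirling r (n + 1) (k + 1) = rStirling r n k + (k + 1 + r) * rStirling r n (k + 1) := by
  have hM : (n + 1) + r = (n + r) + 1 := by omega
  have himg : (((finCongr hM).trans (finSuccEquiv' (Fin.last (n + r)))) ''
      (∅ : Set (Fin ((n + 1) + r)))) = some '' (∅ : Set (Fin (n + r))) := by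
    simp
  rw [rStirling_def',
    GCount_congr ((finCongr hM).trans (finSuccEquiv' (Fin.last (n + r)))),
    himg, img_lower hM (Fin.last (n + r)) r (by rw [Fin.val_last]; omega),
    show (k + 1) + r = (k + r) + 1 from by omega,
    GCount_succ_free (k + r) _ _,
    rStirling_def' r n k, rStirling_def' r n (k + 1),
    show (k + 1) + r = (k + r) + 1 from by omega]

theorem rStirling_rec_zero (r n : ℕ) : rStirling r (n + 1) 0 = r * rStirling r n 0 := by
  rcases r with _ | c
  · have h1 : Nonempty (Fin ((n + 1) + 0)) := ⟨⟨0, by omega⟩⟩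
    rw [rStirling_def', show (0 : ℕ) + 0 = 0 from rfl, GCount_zero_of_zero]
    ring
  · have hM : (n + 1) + (c + 1) = (n + (c + 1)) + 1 := by omega
    have himg : (((finCongr hM).trans (finSuccEquiv' (Fin.last (n + (c + 1))))) ''
        (∅ : Set (Fin ((n + 1) + (c + 1))))) = some '' (∅ : Set (Fin (n + (c + 1)))) := by
      simp
    rw [rStirling_def',
      GCount_congr ((finCongr hM).trans (finSuccEquiv' (Fin.last (n + (c + 1))))),
      himg, img_lower hM (Fin.last (n + (c + 1))) (c + 1) (by rw [Fin.val_last]; omega),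
      show (0 : ℕ) + (c + 1) = c + 1 from by omega,
      GCount_succ_free c _ _]
    have hz : GCount c (∅ : Set (Fin (n + (c + 1)))) {x | (x : ℕ) < c + 1} = 0 := by
      have hcoe : ({x | (x : ℕ) < c + 1} : Set (Fin (n + (c + 1)))) =
          ↑(intervalF (n + (c + 1)) 0 (c + 1)) := by
        rw [coe_intervalF]; ext x; simp
      rw [hcoe]
      exact GCount_zero_of_finset c _ _ (by rw [card_intervalF _ _ _ (by omega)]; omega)
    rw [hz, rStirling_def' (c + 1) n 0, show (0 : ℕ) + (c + 1) = c + 1 from by omega]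
    ring

theorem rrStirling_shift (r1 r2 m i : ℕ) :
    rrStirling r1 (r2 + 1) m i =
      rrStirling r1 r2 m i + (i + 1) * rrStirling r1 r2 m (i + 1) := by
  have hM : m + r1 + (r2 + 1) = (m + r1 + r2) + 1 := by omega
  have hidx : ((⟨r1 + r2, by omega⟩ : Fin ((m + r1 + r2) + 1)) : ℕ) = r1 + r2 := rfl
  rw [rrStirling_def',
    GCount_congr ((finCongr hM).trans (finSuccEquiv' (⟨r1 + r2, by omega⟩ : Fin ((m + r1 + r2) + 1)))),
    img_lower hM _ r1 (by rw [hidx]; omega),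
    img_mid_special hM (by omega) _ hidx,
    show i + (r2 + 1) = (i + r2) + 1 from by omega,
    show (some '' {x : Fin (m + r1 + r2) | r1 ≤ (x : ℕ) ∧ (x : ℕ) < r1 + r2} ∪ {none}) =
      (some '' ↑(intervalF (m + r1 + r2) r1 r2) ∪ {none}) from by rw [coe_intervalF],
    GCount_succ_special (i + r2) _ _,
    card_intervalF _ _ _ (by omega),
    show i + r2 + 1 - r2 = i + 1 from by omega,
    coe_intervalF,
    rrStirling_def' r1 r2 m i, rrStirling_def' r1 r2 m (i + 1),
    show (i + 1) + r2 = (i + r2) + 1 from by omega]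

theorem rrStirling_zero_of_big (r1 r2 n k : ℕ) (h : n + r1 < k) : rrStirling r1 r2 n k = 0 := by
  rw [rrStirling_def']
  exact GCount_zero_of_big _ _ _ (by rw [Fintype.card_fin]; omega)

theorem rStirling_zero_of_big (r n k : ℕ) (h : n < k) : rStirling r n k = 0 := by
  rw [rStirling_def']
  exact GCount_zero_of_big _ _ _ (by rw [Fintype.card_fin]; omega)

theorem rStirling_zero_zero (r : ℕ) : rStirling r 0 0 = 1 := by
  rw [rStirling_def']
  have := GCount_card (∅ : Set (Fin (0 + r))) {x | (x : ℕ) < r}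
  rwa [Fintype.card_fin] at this
end StirlingRec

section Poly
open Polynomial

noncomputable def Pbell (r1 r2 n : ℕ) : Polynomial ℝ :=
  ∑ k ∈ range (n + r1 + 1), Polynomial.C (rrStirling r1 r2 n k : ℝ) * Polynomial.X ^ k

theorem Pbell_coeff (r1 r2 n k : ℕ) : (Pbell r1 r2 n).coeff k = (rrStirling r1 r2 n k : ℝ) := by
  rw [Pbell, Polynomial.finset_sum_coeff]
  simp only [Polynomial.coeff_C_mul, Polynomial.coeff_X_pow, mul_ite, mul_one, mul_zero]
  rw [Finset.sum_ite_eq]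
  by_cases hk : k ∈ range (n + r1 + 1)
  · rw [if_pos hk]
  · rw [if_neg hk, rrStirling_zero_of_big r1 r2 n k (by simpa using hk)]
    simp

theorem Pbell_eval (r1 r2 n : ℕ) (z : ℝ) : (Pbell r1 r2 n).eval z = rrBell r1 r2 n z := by
  rw [Pbell, rrBell, Polynomial.eval_finset_sum]
  exact Finset.sum_congr rfl (fun k _ => by simp)

theorem Pbell_rec (r1 r2 n : ℕ) :
    Pbell r1 r2 (n + 1) = Polynomial.X * Pbell r1 r2 n +
      Polynomial.X * Polynomial.derivative (Pbell r1 r2 n) +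
      Polynomial.C (r2 : ℝ) * Pbell r1 r2 n := by
  apply Polynomial.ext
  intro k
  simp only [Polynomial.coeff_add, Polynomial.coeff_C_mul, Pbell_coeff]
  cases k with
  | zero =>
    rw [Polynomial.X_mul, Polynomial.coeff_mul_X_zero, Polynomial.X_mul,
      Polynomial.coeff_mul_X_zero, rrStirling_rec_zero]
    push_cast
    ring
  | succ k =>
    rw [Polynomial.coeff_X_mul, Polynomial.coeff_X_mul, Polynomial.coeff_derivative,
      Pbell_coeff, Pbell_coeff, rrStirling_rec]
    push_cast
    ring
end Poly

section Poly2
open Polynomial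

theorem Pbell_shift (r1 r2 m : ℕ) :
    Pbell r1 (r2 + 1) m = Pbell r1 r2 m + Polynomial.derivative (Pbell r1 r2 m) := by
  apply Polynomial.ext
  intro k
  rw [Polynomial.coeff_add, Polynomial.coeff_derivative, Pbell_coeff, Pbell_coeff, Pbell_coeff,
    rrStirling_shift]
  push_cast
  ring

theorem X_mul_derivative_X_pow (j : ℕ) :
    Polynomial.X * Polynomial.derivative ((Polynomial.X : Polynomial ℝ) ^ j) =
      Polynomial.C (j : ℝ) * Polynomial.X ^ j := by
  cases j with
  | zero => simp
  | succ j =>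
    rw [Polynomial.derivative_X_pow]
    push_cast
    ring

theorem main_poly (r1 r2 m : ℕ) : ∀ n : ℕ,
    Pbell r1 r2 (n + m) = ∑ j ∈ range (n + 1),
      Polynomial.C (rStirling r2 n j : ℝ) * Polynomial.X ^ j * Pbell r1 (r2 + j) m := by
  intro n
  induction n with
  | zero =>
    rw [Finset.sum_range_one, rStirling_zero_zero]
    simp [Nat.zero_add]
  | succ n ih =>
    have hQ : ∀ j : ℕ, Pbell r1 (r2 + (j + 1)) m =
        Pbell r1 (r2 + j) m + Polynomial.derivative (Pbell r1 (r2 + j) m) :=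
      fun j => Pbell_shift r1 (r2 + j) m
    have hstep : (n + 1) + m = (n + m) + 1 := by omega
    rw [hstep, Pbell_rec, ih]
    -- expand derivative of the sum
    rw [Polynomial.derivative_sum]
    have hder : ∀ j ∈ range (n + 1),
        Polynomial.derivative (Polynomial.C (rStirling r2 n j : ℝ) * Polynomial.X ^ j *
          Pbell r1 (r2 + j) m) =
        Polynomial.C (rStirling r2 n j : ℝ) * (Polynomial.derivative ((Polynomial.X : Polynomial ℝ) ^ j) * Pbell r1 (r2 + j) m
          + Polynomial.X ^ j * Polynomial.derivative (Pbell r1 (r2 + j) m)) := by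
      intro j _
      rw [Polynomial.derivative_mul, Polynomial.derivative_mul, Polynomial.derivative_C]
      ring
    rw [Finset.sum_congr rfl hder, Finset.mul_sum, Finset.mul_sum, Finset.mul_sum]
    rw [← Finset.sum_add_distrib, ← Finset.sum_add_distrib]
    have hterm : ∀ j ∈ range (n + 1),
        Polynomial.X * (Polynomial.C (rStirling r2 n j : ℝ) * Polynomial.X ^ j * Pbell r1 (r2 + j) m) +
          Polynomial.X * (Polynomial.C (rStirling r2 n j : ℝ) *
            (Polynomial.derivative ((Polynomial.X : Polynomial ℝ) ^ j) * Pbell r1 (r2 + j) m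
              + Polynomial.X ^ j * Polynomial.derivative (Pbell r1 (r2 + j) m))) +
          Polynomial.C (r2 : ℝ) * (Polynomial.C (rStirling r2 n j : ℝ) * Polynomial.X ^ j * Pbell r1 (r2 + j) m) =
        Polynomial.C (rStirling r2 n j : ℝ) * Polynomial.X ^ (j + 1) * Pbell r1 (r2 + (j + 1)) m +
          Polynomial.C (((j : ℝ) + r2) * (rStirling r2 n j : ℝ)) * Polynomial.X ^ j * Pbell r1 (r2 + j) m := by
      intro j _
      rw [hQ j]
      have hx := X_mul_derivative_X_pow j
      calc _ = Polynomial.C (rStirling r2 n j : ℝ) * (Polynomial.X * Polynomial.X ^ j) *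
            (Pbell r1 (r2 + j) m + Polynomial.derivative (Pbell r1 (r2 + j) m)) +
            (Polynomial.X * Polynomial.derivative ((Polynomial.X : Polynomial ℝ) ^ j)) *
              (Polynomial.C (rStirling r2 n j : ℝ) * Pbell r1 (r2 + j) m) +
            Polynomial.C (r2 : ℝ) * Polynomial.C (rStirling r2 n j : ℝ) * Polynomial.X ^ j *
              Pbell r1 (r2 + j) m := by ring
        _ = _ := by
            rw [hx]
            simp only [Polynomial.C_add, Polynomial.C_mul, Polynomial.C_1]
            ring
    rw [Finset.sum_congr rfl hterm, Finset.sum_add_distrib]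
    -- now handle the target side
    rw [Finset.sum_range_succ' (fun j => Polynomial.C (rStirling r2 (n + 1) j : ℝ) *
      Polynomial.X ^ j * Pbell r1 (r2 + j) m) (n + 1)]
    have hrec : ∀ j ∈ range (n + 1),
        Polynomial.C (rStirling r2 (n + 1) (j + 1) : ℝ) * Polynomial.X ^ (j + 1) *
          Pbell r1 (r2 + (j + 1)) m =
        Polynomial.C (rStirling r2 n j : ℝ) * Polynomial.X ^ (j + 1) * Pbell r1 (r2 + (j + 1)) m +
          Polynomial.C (((j : ℝ) + 1 + r2) * (rStirling r2 n (j + 1) : ℝ)) * Polynomial.X ^ (j + 1) *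
            Pbell r1 (r2 + (j + 1)) m := by
      intro j _
      rw [rStirling_rec]
      push_cast
      simp only [Polynomial.C_add, Polynomial.C_mul, Polynomial.C_1]
      ring
    rw [Finset.sum_congr rfl hrec, Finset.sum_add_distrib]
    -- reduce to the shifted-sum identity
    have hzero : Polynomial.C (rStirling r2 (n + 1) 0 : ℝ) * Polynomial.X ^ 0 *
        Pbell r1 (r2 + 0) m = Polynomial.C ((r2 : ℝ) * (rStirling r2 n 0 : ℝ)) *
        Pbell r1 (r2 + 0) m := by
      rw [rStirling_rec_zero]
      push_cast
      simp only [Polynomial.C_add, Polynomial.C_mul, Polynomial.C_1]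
      ring
    rw [hzero]
    have hmain : ∑ j ∈ range (n + 1), Polynomial.C (((j : ℝ) + r2) * (rStirling r2 n j : ℝ)) *
        Polynomial.X ^ j * Pbell r1 (r2 + j) m =
        (∑ j ∈ range (n + 1), Polynomial.C (((j : ℝ) + 1 + r2) * (rStirling r2 n (j + 1) : ℝ)) *
          Polynomial.X ^ (j + 1) * Pbell r1 (r2 + (j + 1)) m) +
        Polynomial.C ((r2 : ℝ) * (rStirling r2 n 0 : ℝ)) * Pbell r1 (r2 + 0) m := by
      rw [Finset.sum_range_succ' (fun j => Polynomial.C (((j : ℝ) + r2) * (rStirling r2 n j : ℝ)) *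
        Polynomial.X ^ j * Pbell r1 (r2 + j) m) n]
      rw [Finset.sum_range_succ (fun j => Polynomial.C (((j : ℝ) + 1 + r2) *
        (rStirling r2 n (j + 1) : ℝ)) * Polynomial.X ^ (j + 1) * Pbell r1 (r2 + (j + 1)) m) n]
      rw [rStirling_zero_of_big r2 n (n + 1) (by omega)]
      push_cast
      simp only [Polynomial.C_add, Polynomial.C_mul, Polynomial.C_1, Polynomial.C_0]
      ring
    rw [hmain]
    ring
end Poly2

/-- $B_{n+m}(z;r_1,r_2) = \sum_{j=0}^n {n+r_2 \brace j+r_2}_{r_2} z^j B_m(z;r_1,r_2+j)$. -/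
theorem rrBell_shift_expansion (n m r₁ r₂ : ℕ) (h : r₁ ≤ r₂) (z : ℝ) :
    rrBell r₁ r₂ (n + m) z =
      ∑ j ∈ range (n + 1), (rStirling r₂ n j : ℝ) * z ^ j * rrBell r₁ (r₂ + j) m z := by
  rw [← Pbell_eval, main_poly r₁ r₂ m n, Polynomial.eval_finset_sum]
  exact Finset.sum_congr rfl (fun j _ => by simp [Pbell_eval])
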